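/- arXiv:1410.4097 — 3 statements merged into one kernel-verified Lean document; each statement's English description precedes it below -/
import Mathlib

section
/- Let R ∈ (0,1). Then the function g_R(t) = 1/t + R^t (log R) / (1 − R^t) is strictly decreasing on (0, ∞). -/
open Real

lemma key_ineq (u : ℝ) (hu : 0 < u) : u * Real.exp (u/2) < Real.exp u - 1 := by
  have h := Real.self_lt_sinh_iff.mpr (show 0 < u/2 by linarith)
  rw [Real.sinh_eq] at h
  have h1 : Real.exp (u/2) * Real.exp (-(u/2)) = 1 := by
    rw [← Real.exp_add]; simp
  have h2 : Real.exp (u/2) * Real.exp (u/2) = Real.exp u := by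
    rw [← Real.exp_add]; ring_nf
  nlinarith [Real.exp_pos (u/2), Real.exp_pos (-(u/2))]

lemma h_anti : StrictAntiOn (fun u : ℝ => 1/u - 1/(Real.exp u - 1)) (Set.Ioi 0) := by
  apply strictAntiOn_of_deriv_neg (convex_Ioi 0)
  · apply ContinuousOn.sub
    · exact continuousOn_const.div continuousOn_id (fun x hx => ne_of_gt hx)
    · apply continuousOn_const.div (by fun_prop)
      intro x hx
      have hx0 : (0:ℝ) < x := hx
      have := Real.add_one_lt_exp (ne_of_gt hx0)
      linarith
  · intro x hx
    rw [interior_Ioi] at hx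
    have hx0 : (0:ℝ) < x := hx
    have he1 : (1:ℝ) < Real.exp x := by
      have := Real.add_one_lt_exp (ne_of_gt hx0); linarith
    have hne : Real.exp x - 1 ≠ 0 := by linarith
    have hd1 : HasDerivAt (fun u : ℝ => 1/u) (-(x^2)⁻¹) x := by
      simpa [one_div] using hasDerivAt_inv (ne_of_gt hx0)
    have hd2 : HasDerivAt (fun u : ℝ => Real.exp u - 1) (Real.exp x) x :=
      (Real.hasDerivAt_exp x).sub_const 1
    have hd3 : HasDerivAt (fun u : ℝ => 1/(Real.exp u - 1))
        (-(Real.exp x) / (Real.exp x - 1)^2) x := by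
      simpa [one_div] using hd2.fun_inv hne
    have hd : HasDerivAt (fun u : ℝ => 1/u - 1/(Real.exp u - 1))
        (-(x^2)⁻¹ - (-(Real.exp x) / (Real.exp x - 1)^2)) x := hd1.sub hd3
    rw [hd.deriv]
    have hkey := key_ineq x hx0
    have hsq : x^2 * Real.exp x < (Real.exp x - 1)^2 := by
      have hpos : 0 < x * Real.exp (x/2) := by positivity
      have h2 : Real.exp (x/2) * Real.exp (x/2) = Real.exp x := by
        rw [← Real.exp_add]; ring_nf
      nlinarith
    have hlt : Real.exp x / (Real.exp x - 1)^2 < (x^2)⁻¹ := by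
      have h' : Real.exp x / (Real.exp x - 1)^2 < 1/x^2 := by
        rw [div_lt_div_iff₀ (by positivity) (by positivity)]
        nlinarith
      simpa [one_div] using h'
    have hnd : -Real.exp x / (Real.exp x - 1)^2 = -(Real.exp x / (Real.exp x - 1)^2) := by ring
    rw [hnd]
    linarith

lemma eqn (R t : ℝ) (hR0 : 0 < R) (hR1 : R < 1) (ht : 0 < t) :
    1/t + R ^ t * Real.log R / (1 - R ^ t) =
    (-Real.log R) * (1/((-Real.log R)*t) - 1/(Real.exp ((-Real.log R)*t) - 1)) := by
  have hlog : Real.log R < 0 := Real.log_neg hR0 hR1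
  set c := -Real.log R with hc
  have hc0 : 0 < c := by simp [hc]; linarith
  have ha0 : 0 < R ^ t := Real.rpow_pos_of_pos hR0 t
  have ha1 : R ^ t < 1 := Real.rpow_lt_one (le_of_lt hR0) hR1 ht
  have hexp : Real.exp (c*t) = (R ^ t)⁻¹ := by
    rw [Real.rpow_def_of_pos hR0, ← Real.exp_neg]
    ring_nf
    rw [hc]; ring_nf
  rw [hexp]
  have h1 : 1 - R ^ t ≠ 0 := by linarith
  have h2 : (R ^ t)⁻¹ - 1 ≠ 0 := by
    have : 1 < (R ^ t)⁻¹ := (one_lt_inv₀ ha0).mpr ha1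
    linarith
  have hlogc : Real.log R = -c := by simp [hc]
  rw [hlogc]
  field_simp
  ring

/-- The function t ↦ 1/t + Rᵗ log R / (1 - Rᵗ) is strictly decreasing on (0,∞) for R ∈ (0,1). -/
theorem stmt_7 (R : ℝ) (hR : R ∈ Set.Ioo (0 : ℝ) 1) :
    StrictAntiOn (fun t : ℝ => 1 / t + R ^ t * Real.log R / (1 - R ^ t)) (Set.Ioi 0) := by
  obtain ⟨hR0, hR1⟩ := hR
  have hlog : Real.log R < 0 := Real.log_neg hR0 hR1
  set c := -Real.log R with hc
  have hc0 : 0 < c := by simp [hc]; linarith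
  intro x hx y hy hxy
  have hx0 : (0:ℝ) < x := hx
  have hy0 : (0:ℝ) < y := hy
  simp only
  rw [eqn R x hR0 hR1 hx0, eqn R y hR0 hR1 hy0]
  have hmem : ∀ t : ℝ, 0 < t → c * t ∈ Set.Ioi (0:ℝ) := fun t ht => by
    simp [Set.mem_Ioi]; positivity
  have := h_anti (hmem x hx0) (hmem y hy0) (by exact mul_lt_mul_of_pos_left hxy hc0)
  exact mul_lt_mul_of_pos_left this hc0
end

section
/- Let R ∈ (0,1) and let H be a real number with 0 < H < −(log R)/2. Then there exists a unique α > 0 such that H = 1/α + R^α (log R) / (1 − R^α). (This establishes existence and uniqueness of the solution of the defining equation of the tail index estimator for truncated Pareto-type distributions.) -/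
open Real

noncomputable def fAux (x : ℝ) : ℝ := 1/x - 1/(Real.exp x - 1)

lemma exp_sub_one_pos' {x : ℝ} (hx : 0 < x) : 0 < Real.exp x - 1 := by
  have := Real.add_one_lt_exp (ne_of_gt hx)
  linarith

lemma fAux_hasDeriv {x : ℝ} (hx : 0 < x) :
    HasDerivAt fAux (-(x^2)⁻¹ + Real.exp x / (Real.exp x - 1)^2) x := by
  have hne : x ≠ 0 := ne_of_gt hx
  have he : Real.exp x - 1 ≠ 0 := ne_of_gt (exp_sub_one_pos' hx)
  have h1 : HasDerivAt (fun y : ℝ => 1/y) (-(x^2)⁻¹) x := by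
    simpa [one_div] using hasDerivAt_inv hne
  have h2 : HasDerivAt (fun y : ℝ => Real.exp y - 1) (Real.exp x) x :=
    (Real.hasDerivAt_exp x).sub_const 1
  have h3 : HasDerivAt (fun y : ℝ => 1/(Real.exp y - 1))
      (-(Real.exp x) / (Real.exp x - 1)^2) x := by
    simpa [one_div, Pi.inv_def] using h2.inv he
  have := h1.sub h3
  exact this.congr_deriv (by ring)

lemma fAux_deriv_neg {x : ℝ} (hx : 0 < x) :
    -(x^2)⁻¹ + Real.exp x / (Real.exp x - 1)^2 < 0 := by
  have hkey : x^2 * Real.exp x < (Real.exp x - 1)^2 := by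
    have hs : x/2 < Real.sinh (x/2) := Real.self_lt_sinh_iff.mpr (by linarith)
    have e1 : Real.exp (x/2) * Real.exp (x/2) = Real.exp x := by
      rw [← Real.exp_add]; ring_nf
    have e2 : Real.exp (x/2) * Real.exp (-(x/2)) = 1 := by
      rw [← Real.exp_add]; simp
    have hid : Real.exp x - 1 = Real.exp (x/2) * (2 * Real.sinh (x/2)) := by
      rw [Real.sinh_eq]
      linear_combination e2 - e1
    have hep : (0:ℝ) < Real.exp (x/2) := Real.exp_pos _
    have hsq : (Real.exp x - 1)^2 = Real.exp x * (2 * Real.sinh (x/2))^2 := by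
      rw [hid, mul_pow, sq, e1]
    rw [hsq]
    have hxlt : x < 2 * Real.sinh (x/2) := by linarith
    nlinarith [mul_pos (Real.exp_pos x)
      (mul_pos (sub_pos.mpr hxlt) (show (0:ℝ) < 2 * Real.sinh (x/2) + x by linarith))]
  have he : (0:ℝ) < (Real.exp x - 1)^2 := pow_pos (exp_sub_one_pos' hx) 2
  have hx2 : (0:ℝ) < x^2 := by positivity
  rw [neg_add_lt_iff_lt_add, add_zero, div_lt_iff₀ he]
  rw [inv_mul_eq_div, lt_div_iff₀ hx2] at *
  nlinarith [Real.exp_pos x]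

lemma fAux_contOn : ContinuousOn fAux (Set.Ioi 0) := by
  intro x hx
  exact ((fAux_hasDeriv hx).continuousAt).continuousWithinAt

lemma fAux_anti : StrictAntiOn fAux (Set.Ioi 0) := by
  apply strictAntiOn_of_deriv_neg (convex_Ioi 0) fAux_contOn
  intro x hx
  rw [interior_Ioi] at hx
  rw [(fAux_hasDeriv hx).deriv]
  exact fAux_deriv_neg hx

lemma fAux_lower {x : ℝ} (hx : 0 < x) : 1/(2+x) ≤ fAux x := by
  have hq : x + x^2/2 ≤ Real.exp x - 1 := by
    have := Real.quadratic_le_exp_of_nonneg hx.le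
    linarith
  have h1 : (0:ℝ) < x + x^2/2 := by positivity
  have h2 : 0 < Real.exp x - 1 := exp_sub_one_pos' hx
  have h3 : 1/(Real.exp x - 1) ≤ 1/(x + x^2/2) := by
    apply one_div_le_one_div_of_le h1 hq
  have h4 : 1/x - 1/(x + x^2/2) = 1/(2+x) := by
    field_simp
    ring
  unfold fAux
  linarith
  
lemma fAux_upper {x : ℝ} (hx : 0 < x) : fAux x ≤ 1/x := by
  have h2 : 0 < Real.exp x - 1 := exp_sub_one_pos' hx
  have : 0 < 1/(Real.exp x - 1) := by positivity
  unfold fAux; linarith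

lemma fAux_surj {c : ℝ} (hc0 : 0 < c) (hc : c < 1/2) : ∃ x > 0, fAux x = c := by
  set a : ℝ := (1 - 2*c)/(2*c) with ha
  have ha0 : 0 < a := by
    apply div_pos <;> linarith
  set b : ℝ := max (a+1) (2/c) with hb
  have hab : a ≤ b := le_trans (by linarith) (le_max_left _ _)
  have hb0 : 0 < b := lt_of_lt_of_le (by linarith) (le_max_left _ _)
  have hfa : c < fAux a := by
    have := fAux_lower ha0
    have h2a : 0 < 2 + a := by linarith
    have : c < 1/(2+a) := by
      rw [lt_div_iff₀ h2a]
      have : c * (2+a) = c + 1/2 := by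
        rw [ha]; field_simp; ring
      rw [this]; linarith
    linarith [fAux_lower ha0]
  have hfb : fAux b < c := by
    have h1 : fAux b ≤ 1/b := fAux_upper hb0
    have h2 : 2/c ≤ b := le_max_right _ _
    have : 1/b ≤ c/2 := by
      rw [div_le_div_iff₀ hb0 (by norm_num : (0:ℝ) < 2)]
      calc 1 * 2 = c * (2/c) := by field_simp
        _ ≤ c * b := by nlinarith
    linarith
  have hcont : ContinuousOn fAux (Set.Icc a b) := fAux_contOn.mono (by
    intro y hy
    exact lt_of_lt_of_le ha0 hy.1)
  have := intermediate_value_Icc' hab hcont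
  have hmem : c ∈ Set.Icc (fAux b) (fAux a) := ⟨hfb.le, hfa.le⟩
  obtain ⟨x, hx, hfx⟩ := this hmem
  exact ⟨x, lt_of_lt_of_le ha0 hx.1, hfx⟩

/-- Existence and uniqueness of the solution of the defining equation of the
truncated-Pareto tail index estimator. -/
theorem stmt_9 (R H : ℝ) (hR : R ∈ Set.Ioo (0 : ℝ) 1) (hH0 : 0 < H)
    (hH : H < -(Real.log R) / 2) :
    ∃! α : ℝ, 0 < α ∧ H = 1 / α + R ^ α * Real.log R / (1 - R ^ α) := by
  obtain ⟨hR0, hR1⟩ := hR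
  set r : ℝ := -Real.log R with hr
  have hlog : Real.log R < 0 := Real.log_neg hR0 hR1
  have hrpos : 0 < r := by simp [hr]; linarith
  set c : ℝ := H / r with hc
  have hc0 : 0 < c := div_pos hH0 hrpos
  have hclt : c < 1/2 := by
    rw [hc, div_lt_iff₀ hrpos]
    have : -Real.log R / 2 = r/2 := by rw [hr]
    nlinarith
  -- key equation rewrite
  have key : ∀ α : ℝ, 0 < α →
      (H = 1 / α + R ^ α * Real.log R / (1 - R ^ α) ↔ fAux (r * α) = c) := by
    intro α hα
    have hx : 0 < r * α := mul_pos hrpos hα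
    have hRα : R ^ α = Real.exp (-(r * α)) := by
      rw [Real.rpow_def_of_pos hR0, hr]; ring_nf
    have hexp : 0 < Real.exp (r*α) - 1 := exp_sub_one_pos' hx
    have heval : 1 / α + R ^ α * Real.log R / (1 - R ^ α) = r * fAux (r * α) := by
      rw [hRα]
      unfold fAux
      have h1 : Real.log R = -r := by rw [hr]; ring
      rw [h1, Real.exp_neg]
      have hne : Real.exp (r*α) ≠ 0 := (Real.exp_pos _).ne'
      have h1m : 1 - (Real.exp (r*α))⁻¹ = (Real.exp (r*α) - 1)/Real.exp (r*α) := by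
        field_simp
      rw [h1m]
      field_simp
      ring
    rw [heval, hc]
    constructor
    · intro h; rw [h]; field_simp
    · intro h
      rw [eq_div_iff hrpos.ne'] at h
      linarith [h]
  obtain ⟨x, hx0, hfx⟩ := fAux_surj hc0 hclt
  refine ⟨x / r, ⟨div_pos hx0 hrpos, ?_⟩, ?_⟩
  · rw [key _ (div_pos hx0 hrpos)]
    rw [mul_div_cancel₀ _ hrpos.ne']
    exact hfx
  · rintro α' ⟨hα', heq⟩
    rw [key _ hα'] at heq
    have hinj := fAux_anti.injOn
    have hx1 : r * α' ∈ Set.Ioi (0:ℝ) := mul_pos hrpos hα'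
    have hx2 : x ∈ Set.Ioi (0:ℝ) := hx0
    have : r * α' = x := hinj hx1 hx2 (by rw [heq, hfx])
    rw [eq_div_iff hrpos.ne']
    linarith [this]
end

section
/- Let α > 0, ρ* < 0, and set h_{ρ*}(t) = (t^{ρ*} − 1)/ρ* for t > 0. For λ ∈ [0,1) and κ > 0 define A_{κ,λ} = (1/(1−λ)) ∫_λ^1 h_{ρ*}( (1+κu)^{-1/α} ) du − h_{ρ*}( (1+κ)^{-1/α} ), B_{κ,λ} = h_{ρ*}( (1+κ)^{-1/α} ) − h_{ρ*}( (1+κλ)^{-1/α} ), c_{κ,λ} = (1+κλ)/((1−λ)κ) + ((1+κλ)(1+κ)/((1−λ)^2 κ^2)) log( (1+κλ)/(1+κ) ), δ_{κ,λ} = 1 − ((1+κλ)(1+κ)/((1−λ)^2 κ^2)) log^2( (1+κ)/(1+κλ) ), and β_{κ,λ} = A_{κ,λ} − B_{κ,λ} c_{κ,λ}. Then lim_{κ → 0+} β_{κ,λ} / δ_{κ,λ} = 1/α − ρ*/α^2. -/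
open Real Filter Set Topology
set_option maxHeartbeats 1000000


noncomputable def bfn (c q : ℝ) : ℝ → ℝ := fun x => (1 + c*x) ^ q
noncomputable def Pb (c q : ℝ) : ℝ → ℝ := fun x =>
  1 + q*c*x + q*(q-1)/2*c^2*x^2 + q*(q-1)*(q-2)/6*c^3*x^3 + q*(q-1)*(q-2)*(q-3)/24*c^4*x^4
noncomputable def Lb (c : ℝ) : ℝ → ℝ := fun x => Real.log (1 + c*x)
noncomputable def PL (c : ℝ) : ℝ → ℝ := fun x => c*x - c^2*x^2/2 + c^3*x^3/3 - c^4*x^4/4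

noncomputable def Mfun (l s : ℝ) : ℝ → ℝ := fun x =>
  (1-l)*x*(bfn 1 (s+1) x - bfn l (s+1) x) - (s+1)*x^2*(1-l)^2*(bfn 1 s x)
  - (s+1)*(bfn 1 s x - bfn l s x)*(1+x*l)*(x*(1-l) - (1+x)*(Lb 1 x - Lb l x))
noncomputable def Dfun (l : ℝ) : ℝ → ℝ := fun x =>
  (1-l)^2*x^2 - (1+x*l)*(1+x)*(Lb 1 x - Lb l x)^2
noncomputable def Mp (l s : ℝ) : ℝ → ℝ := fun x =>
  (1-l)*x*(Pb 1 (s+1) x - Pb l (s+1) x) - (s+1)*x^2*(1-l)^2*(Pb 1 s x)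
  - (s+1)*(Pb 1 s x - Pb l s x)*(1+x*l)*(x*(1-l) - (1+x)*(PL 1 x - PL l x))
noncomputable def Dp (l : ℝ) : ℝ → ℝ := fun x =>
  (1-l)^2*x^2 - (1+x*l)*(1+x)*(PL 1 x - PL l x)^2

noncomputable def Rm0 (l s : ℝ) : ℝ → ℝ := fun x =>
    ((-1 : ℝ)/12)*s^1
    + ((1 : ℝ)/12)*s^1*x^1
    + ((-2 : ℝ)/9)*s^1*x^2
    + ((7 : ℝ)/36)*s^1*x^3
    + ((-5 : ℝ)/48)*s^1*x^4
    + ((1 : ℝ)/16)*s^1*x^5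
    + ((-1 : ℝ)/6)*s^2
    + ((1 : ℝ)/8)*s^2*x^1
    + ((-47 : ℝ)/144)*s^2*x^2
    + ((-7 : ℝ)/144)*s^2*x^3
    + ((17 : ℝ)/288)*s^2*x^4
    + ((-5 : ℝ)/96)*s^2*x^5
    + ((-1 : ℝ)/12)*s^3
    + ((-1 : ℝ)/144)*s^3*x^2
    + ((-3 : ℝ)/16)*s^3*x^3
    + ((29 : ℝ)/288)*s^3*x^4
    + ((-5 : ℝ)/96)*s^3*x^5
    + ((-1 : ℝ)/24)*s^4*x^1
    + ((11 : ℝ)/144)*s^4*x^2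
    + ((7 : ℝ)/144)*s^4*x^3
    + ((-17 : ℝ)/288)*s^4*x^4
    + ((5 : ℝ)/96)*s^4*x^5
    + ((-1 : ℝ)/48)*s^5*x^2
    + ((-1 : ℝ)/144)*s^5*x^3
    + ((1 : ℝ)/288)*s^5*x^4

noncomputable def Rm1 (l s : ℝ) : ℝ → ℝ := fun x =>
    ((-1 : ℝ)/96)*s^5*x^5
    + ((1 : ℝ)/3)*l^1*s^1
    + ((-1 : ℝ)/4)*l^1*s^1*x^1
    + ((1 : ℝ)/3)*l^1*s^1*x^2
    + ((-17 : ℝ)/36)*l^1*s^1*x^3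
    + ((7 : ℝ)/36)*l^1*s^1*x^4
    + ((-5 : ℝ)/48)*l^1*s^1*x^5
    + ((1 : ℝ)/16)*l^1*s^1*x^6
    + ((2 : ℝ)/3)*l^1*s^2
    + ((-3 : ℝ)/8)*l^1*s^2*x^1
    + ((11 : ℝ)/24)*l^1*s^2*x^2
    + ((-17 : ℝ)/144)*l^1*s^2*x^3
    + ((-7 : ℝ)/144)*l^1*s^2*x^4
    + ((17 : ℝ)/288)*l^1*s^2*x^5
    + ((-5 : ℝ)/96)*l^1*s^2*x^6
    + ((1 : ℝ)/3)*l^1*s^3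
    + ((-1 : ℝ)/24)*l^1*s^3*x^2
    + ((29 : ℝ)/144)*l^1*s^3*x^3
    + ((-3 : ℝ)/16)*l^1*s^3*x^4
    + ((29 : ℝ)/288)*l^1*s^3*x^5
    + ((-5 : ℝ)/96)*l^1*s^3*x^6
    + ((1 : ℝ)/8)*l^1*s^4*x^1
    + ((-1 : ℝ)/8)*l^1*s^4*x^2
    + ((-19 : ℝ)/144)*l^1*s^4*x^3
    + ((7 : ℝ)/144)*l^1*s^4*x^4

noncomputable def Rm2 (l s : ℝ) : ℝ → ℝ := fun x =>
    ((-17 : ℝ)/288)*l^1*s^4*x^5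
    + ((5 : ℝ)/96)*l^1*s^4*x^6
    + ((1 : ℝ)/24)*l^1*s^5*x^2
    + ((1 : ℝ)/48)*l^1*s^5*x^3
    + ((-1 : ℝ)/144)*l^1*s^5*x^4
    + ((1 : ℝ)/288)*l^1*s^5*x^5
    + ((-1 : ℝ)/96)*l^1*s^5*x^6
    + ((-1 : ℝ)/2)*l^2*s^1
    + ((1 : ℝ)/6)*l^2*s^1*x^1
    + ((-1 : ℝ)/12)*l^2*s^1*x^2
    + ((1 : ℝ)/4)*l^2*s^1*x^3
    + ((-1 : ℝ))*l^2*s^2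
    + ((1 : ℝ)/4)*l^2*s^2*x^1
    + ((-5 : ℝ)/48)*l^2*s^2*x^2
    + ((7 : ℝ)/48)*l^2*s^2*x^3
    + ((-1 : ℝ)/2)*l^2*s^3
    + ((1 : ℝ)/48)*l^2*s^3*x^2
    + ((1 : ℝ)/48)*l^2*s^3*x^3
    + ((-1 : ℝ)/12)*l^2*s^4*x^1
    + ((1 : ℝ)/48)*l^2*s^4*x^2
    + ((5 : ℝ)/48)*l^2*s^4*x^3
    + ((-1 : ℝ)/48)*l^2*s^5*x^2
    + ((-1 : ℝ)/48)*l^2*s^5*x^3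
    + ((1 : ℝ)/3)*l^3*s^1
    + ((1 : ℝ)/6)*l^3*s^1*x^1

noncomputable def Rm3 (l s : ℝ) : ℝ → ℝ := fun x =>
    ((-1 : ℝ)/18)*l^3*s^1*x^2
    + ((1 : ℝ)/36)*l^3*s^1*x^3
    + ((-1 : ℝ)/12)*l^3*s^1*x^4
    + ((2 : ℝ)/3)*l^3*s^2
    + ((1 : ℝ)/4)*l^3*s^2*x^1
    + ((-1 : ℝ)/18)*l^3*s^2*x^2
    + ((1 : ℝ)/48)*l^3*s^2*x^3
    + ((-1 : ℝ)/144)*l^3*s^2*x^4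
    + ((1 : ℝ)/3)*l^3*s^3
    + ((1 : ℝ)/18)*l^3*s^3*x^2
    + ((-5 : ℝ)/144)*l^3*s^3*x^3
    + ((11 : ℝ)/144)*l^3*s^3*x^4
    + ((-1 : ℝ)/12)*l^3*s^4*x^1
    + ((1 : ℝ)/18)*l^3*s^4*x^2
    + ((-1 : ℝ)/48)*l^3*s^4*x^3
    + ((1 : ℝ)/144)*l^3*s^4*x^4
    + ((1 : ℝ)/144)*l^3*s^5*x^3
    + ((1 : ℝ)/144)*l^3*s^5*x^4
    + ((-1 : ℝ)/12)*l^4*s^1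
    + ((-1 : ℝ)/4)*l^4*s^1*x^1
    + ((-1 : ℝ)/12)*l^4*s^1*x^2
    + ((1 : ℝ)/36)*l^4*s^1*x^3
    + ((-1 : ℝ)/72)*l^4*s^1*x^4
    + ((1 : ℝ)/24)*l^4*s^1*x^5
    + ((-1 : ℝ)/6)*l^4*s^2

noncomputable def Rm4 (l s : ℝ) : ℝ → ℝ := fun x =>
    ((-3 : ℝ)/8)*l^4*s^2*x^1
    + ((-5 : ℝ)/48)*l^4*s^2*x^2
    + ((1 : ℝ)/48)*l^4*s^2*x^3
    + ((-1 : ℝ)/144)*l^4*s^2*x^4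
    + ((-1 : ℝ)/144)*l^4*s^2*x^5
    + ((-1 : ℝ)/12)*l^4*s^3
    + ((1 : ℝ)/48)*l^4*s^3*x^2
    + ((-5 : ℝ)/144)*l^4*s^3*x^3
    + ((1 : ℝ)/48)*l^4*s^3*x^4
    + ((-7 : ℝ)/144)*l^4*s^3*x^5
    + ((1 : ℝ)/8)*l^4*s^4*x^1
    + ((1 : ℝ)/48)*l^4*s^4*x^2
    + ((-1 : ℝ)/48)*l^4*s^4*x^3
    + ((1 : ℝ)/144)*l^4*s^4*x^4
    + ((1 : ℝ)/144)*l^4*s^4*x^5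
    + ((-1 : ℝ)/48)*l^4*s^5*x^2
    + ((1 : ℝ)/144)*l^4*s^5*x^3
    + ((-1 : ℝ)/144)*l^4*s^5*x^4
    + ((1 : ℝ)/144)*l^4*s^5*x^5
    + ((1 : ℝ)/12)*l^5*s^1*x^1
    + ((1 : ℝ)/3)*l^5*s^1*x^2
    + ((1 : ℝ)/4)*l^5*s^1*x^3
    + ((-1 : ℝ)/12)*l^5*s^1*x^4
    + ((1 : ℝ)/24)*l^5*s^1*x^5
    + ((-1 : ℝ)/8)*l^5*s^1*x^6

noncomputable def Rm5 (l s : ℝ) : ℝ → ℝ := fun x =>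
    ((1 : ℝ)/8)*l^5*s^2*x^1
    + ((11 : ℝ)/24)*l^5*s^2*x^2
    + ((7 : ℝ)/48)*l^5*s^2*x^3
    + ((-1 : ℝ)/144)*l^5*s^2*x^4
    + ((-1 : ℝ)/144)*l^5*s^2*x^5
    + ((5 : ℝ)/48)*l^5*s^2*x^6
    + ((-1 : ℝ)/24)*l^5*s^3*x^2
    + ((1 : ℝ)/48)*l^5*s^3*x^3
    + ((11 : ℝ)/144)*l^5*s^3*x^4
    + ((-7 : ℝ)/144)*l^5*s^3*x^5
    + ((5 : ℝ)/48)*l^5*s^3*x^6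
    + ((-1 : ℝ)/24)*l^5*s^4*x^1
    + ((-1 : ℝ)/8)*l^5*s^4*x^2
    + ((5 : ℝ)/48)*l^5*s^4*x^3
    + ((1 : ℝ)/144)*l^5*s^4*x^4
    + ((1 : ℝ)/144)*l^5*s^4*x^5
    + ((-5 : ℝ)/48)*l^5*s^4*x^6
    + ((1 : ℝ)/24)*l^5*s^5*x^2
    + ((-1 : ℝ)/48)*l^5*s^5*x^3
    + ((1 : ℝ)/144)*l^5*s^5*x^4
    + ((1 : ℝ)/144)*l^5*s^5*x^5
    + ((1 : ℝ)/48)*l^5*s^5*x^6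
    + ((-2 : ℝ)/9)*l^6*s^1*x^2
    + ((-17 : ℝ)/36)*l^6*s^1*x^3
    + ((-47 : ℝ)/144)*l^6*s^2*x^2

noncomputable def Rm6 (l s : ℝ) : ℝ → ℝ := fun x =>
    ((-17 : ℝ)/144)*l^6*s^2*x^3
    + ((-1 : ℝ)/144)*l^6*s^3*x^2
    + ((29 : ℝ)/144)*l^6*s^3*x^3
    + ((11 : ℝ)/144)*l^6*s^4*x^2
    + ((-19 : ℝ)/144)*l^6*s^4*x^3
    + ((-1 : ℝ)/48)*l^6*s^5*x^2
    + ((1 : ℝ)/48)*l^6*s^5*x^3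
    + ((7 : ℝ)/36)*l^7*s^1*x^3
    + ((7 : ℝ)/36)*l^7*s^1*x^4
    + ((-7 : ℝ)/144)*l^7*s^2*x^3
    + ((-7 : ℝ)/144)*l^7*s^2*x^4
    + ((-3 : ℝ)/16)*l^7*s^3*x^3
    + ((-3 : ℝ)/16)*l^7*s^3*x^4
    + ((7 : ℝ)/144)*l^7*s^4*x^3
    + ((7 : ℝ)/144)*l^7*s^4*x^4
    + ((-1 : ℝ)/144)*l^7*s^5*x^3
    + ((-1 : ℝ)/144)*l^7*s^5*x^4
    + ((-5 : ℝ)/48)*l^8*s^1*x^4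
    + ((-5 : ℝ)/48)*l^8*s^1*x^5
    + ((17 : ℝ)/288)*l^8*s^2*x^4
    + ((17 : ℝ)/288)*l^8*s^2*x^5
    + ((29 : ℝ)/288)*l^8*s^3*x^4
    + ((29 : ℝ)/288)*l^8*s^3*x^5
    + ((-17 : ℝ)/288)*l^8*s^4*x^4
    + ((-17 : ℝ)/288)*l^8*s^4*x^5

noncomputable def Rm7 (l s : ℝ) : ℝ → ℝ := fun x =>
    ((1 : ℝ)/288)*l^8*s^5*x^4
    + ((1 : ℝ)/288)*l^8*s^5*x^5
    + ((1 : ℝ)/16)*l^9*s^1*x^5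
    + ((1 : ℝ)/16)*l^9*s^1*x^6
    + ((-5 : ℝ)/96)*l^9*s^2*x^5
    + ((-5 : ℝ)/96)*l^9*s^2*x^6
    + ((-5 : ℝ)/96)*l^9*s^3*x^5
    + ((-5 : ℝ)/96)*l^9*s^3*x^6
    + ((5 : ℝ)/96)*l^9*s^4*x^5
    + ((5 : ℝ)/96)*l^9*s^4*x^6
    + ((-1 : ℝ)/96)*l^9*s^5*x^5
    + ((-1 : ℝ)/96)*l^9*s^5*x^6

noncomputable def Rm (l s : ℝ) : ℝ → ℝ := fun x =>
    Rm0 l s x + Rm1 l s x + Rm2 l s x + Rm3 l s x + Rm4 l s x + Rm5 l s x + Rm6 l s x + Rm7 l s x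

noncomputable def Rd (l : ℝ) : ℝ → ℝ := fun x =>
    ((1 : ℝ)/12)
    + ((-1 : ℝ)/12)*x^1
    + ((17 : ℝ)/36)*x^2
    + ((-7 : ℝ)/36)*x^3
    + ((5 : ℝ)/48)*x^4
    + ((-1 : ℝ)/16)*x^5
    + ((-1 : ℝ)/3)*l^1
    + ((1 : ℝ)/4)*l^1*x^1
    + ((-7 : ℝ)/12)*l^1*x^2
    + ((17 : ℝ)/36)*l^1*x^3
    + ((-7 : ℝ)/36)*l^1*x^4
    + ((5 : ℝ)/48)*l^1*x^5
    + ((-1 : ℝ)/16)*l^1*x^6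
    + ((1 : ℝ)/2)*l^2
    + ((-1 : ℝ)/6)*l^2*x^1
    + ((1 : ℝ)/12)*l^2*x^2
    + ((-1 : ℝ)/4)*l^2*x^3
    + ((-1 : ℝ)/3)*l^3
    + ((-1 : ℝ)/6)*l^3*x^1
    + ((1 : ℝ)/18)*l^3*x^2
    + ((-1 : ℝ)/36)*l^3*x^3
    + ((1 : ℝ)/12)*l^3*x^4
    + ((1 : ℝ)/12)*l^4
    + ((1 : ℝ)/4)*l^4*x^1
    + ((1 : ℝ)/12)*l^4*x^2
    + ((-1 : ℝ)/36)*l^4*x^3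
    + ((1 : ℝ)/72)*l^4*x^4
    + ((-1 : ℝ)/24)*l^4*x^5
    + ((-1 : ℝ)/12)*l^5*x^1
    + ((-7 : ℝ)/12)*l^5*x^2
    + ((-1 : ℝ)/4)*l^5*x^3
    + ((1 : ℝ)/12)*l^5*x^4
    + ((-1 : ℝ)/24)*l^5*x^5
    + ((1 : ℝ)/8)*l^5*x^6
    + ((17 : ℝ)/36)*l^6*x^2
    + ((17 : ℝ)/36)*l^6*x^3
    + ((-7 : ℝ)/36)*l^7*x^3
    + ((-7 : ℝ)/36)*l^7*x^4
    + ((5 : ℝ)/48)*l^8*x^4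
    + ((5 : ℝ)/48)*l^8*x^5
    + ((-1 : ℝ)/16)*l^9*x^5
    + ((-1 : ℝ)/16)*l^9*x^6

lemma Dp_eq (l x : ℝ) : Dp l x = x^4 * Rd l x := by
  simp only [Dp, PL, Rd]
  ring

lemma Rd_zero (l : ℝ) : Rd l 0 = (1-l)^4/12 := by
  simp only [Rd]
  norm_num
  ring

lemma Rd_cont (l : ℝ) : Continuous (fun x => Rd l x) := by
  simp only [Rd]; fun_prop

lemma Mp_eq (l s x : ℝ) : Mp l s x = x^4 * Rm l s x := by
  simp only [Mp, Pb, PL, Rm, Rm0, Rm1, Rm2, Rm3, Rm4, Rm5, Rm6, Rm7]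
  ring

lemma Rm_zero (l s : ℝ) : Rm l s 0 = -(s*(s+1)^2*(1-l)^4)/12 := by
  simp only [Rm, Rm0, Rm1, Rm2, Rm3, Rm4, Rm5, Rm6, Rm7]
  norm_num
  ring

lemma Rm_cont (l s : ℝ) : Continuous (fun x => Rm l s x) := by
  simp only [Rm, Rm0, Rm1, Rm2, Rm3, Rm4, Rm5, Rm6, Rm7]; fun_prop


lemma hasDerivAt_one_add_rpow (c q x : ℝ) (hx : 0 < 1 + c * x) :
    HasDerivAt (fun y : ℝ => (1 + c * y) ^ q) (q * c * (1 + c * x) ^ (q - 1)) x := by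
  have h1 : HasDerivAt (fun y : ℝ => 1 + c * y) c x := by
    simpa using ((hasDerivAt_id x).const_mul c).const_add 1
  have h2 := (Real.hasDerivAt_rpow_const (x := 1 + c * x) (p := q) (Or.inl (ne_of_gt hx)))
  have h3 := h2.comp x h1
  refine h3.congr_deriv ?_
  ring

lemma hasDerivAt_poly4 (a0 a1 a2 a3 a4 x : ℝ) :
    HasDerivAt (fun y : ℝ => a0 + a1*y + a2*y^2 + a3*y^3 + a4*y^4)
      (a1 + 2*a2*x + 3*a3*x^2 + 4*a4*x^3) x := by
  have h := ((((hasDerivAt_const x a0).add ((hasDerivAt_id x).const_mul a1)).add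
    ((hasDerivAt_pow 2 x).const_mul a2)).add
    ((hasDerivAt_pow 3 x).const_mul a3)).add
    ((hasDerivAt_pow 4 x).const_mul a4)
  refine h.congr_deriv ?_
  push_cast
  ring

lemma lhop_step (n : ℕ) (f f' : ℝ → ℝ)
    (hd : ∀ x ∈ Set.Ioo (0:ℝ) 1, HasDerivAt f (f' x) x)
    (hf0 : Tendsto f (𝓝[>] (0:ℝ)) (𝓝 0)) (L : ℝ)
    (hdiv : Tendsto (fun x => f' x / ((n+1) * x ^ n)) (𝓝[>] (0:ℝ)) (𝓝 L)) :
    Tendsto (fun x => f x / x ^ (n+1)) (𝓝[>] (0:ℝ)) (𝓝 L) := by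
  apply HasDerivAt.lhopital_zero_right_on_Ioo (f' := f') (g' := fun x => (n+1) * x ^ n)
    one_pos hd
  · intro x _
    have := hasDerivAt_pow (n+1) x
    refine this.congr_deriv ?_
    push_cast
    simp
  · intro x hx
    have hx0 : (0:ℝ) < x := hx.1
    positivity
  · exact hf0
  · have h1 : Tendsto (fun x : ℝ => x ^ (n+1)) (𝓝 (0:ℝ)) (𝓝 ((0:ℝ) ^ (n+1))) :=
      (continuous_pow (n+1)).tendsto 0
    rw [zero_pow (Nat.succ_ne_zero n)] at h1
    exact h1.mono_left nhdsWithin_le_nhds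
  · exact hdiv

lemma rpow_taylor (c q : ℝ) (hc0 : 0 ≤ c) (hc1 : c ≤ 1) :
    Tendsto (fun x => (bfn c q x - Pb c q x) / x ^ 4) (𝓝[>] (0:ℝ)) (𝓝 0) := by
  have hpos : ∀ x ∈ Ioo (0:ℝ) 1, (0:ℝ) < 1 + c*x := by
    intro x hx; nlinarith [hx.1, hx.2]
  have hca : ∀ e : ℝ, ContinuousAt (fun x : ℝ => (1+c*x)^e) 0 :=
    fun e => (hasDerivAt_one_add_rpow c e 0 (by norm_num)).continuousAt
  -- r4
  have ht4 : Tendsto (fun x : ℝ => q*(q-1)*(q-2)*(q-3)*c^4*(1+c*x)^(q-4)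
      - q*(q-1)*(q-2)*(q-3)*c^4) (𝓝[>] (0:ℝ)) (𝓝 0) := by
    have hc : ContinuousAt (fun x : ℝ => q*(q-1)*(q-2)*(q-3)*c^4*(1+c*x)^(q-4)
        - q*(q-1)*(q-2)*(q-3)*c^4) 0 :=
      ((hca (q-4)).const_mul _).sub continuousAt_const
    have := hc.tendsto.mono_left (nhdsWithin_le_nhds (s := Set.Ioi (0:ℝ)))
    simpa using this
  -- r3
  have hd3 : ∀ x ∈ Ioo (0:ℝ) 1, HasDerivAt (fun x : ℝ =>
        q*(q-1)*(q-2)*c^3*(1+c*x)^(q-3)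
        - (q*(q-1)*(q-2)*c^3 + q*(q-1)*(q-2)*(q-3)*c^4*x + 0*x^2 + 0*x^3 + 0*x^4))
      (q*(q-1)*(q-2)*(q-3)*c^4*(1+c*x)^(q-4) - q*(q-1)*(q-2)*(q-3)*c^4) x := by
    intro x hx
    have h1 := (hasDerivAt_one_add_rpow c (q-3) x (hpos x hx)).const_mul (q*(q-1)*(q-2)*c^3)
    have h2 := hasDerivAt_poly4 (q*(q-1)*(q-2)*c^3) (q*(q-1)*(q-2)*(q-3)*c^4) 0 0 0 x
    have h3 := h1.sub h2
    refine h3.congr_deriv ?_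
    rw [show q-3-1 = q-4 by ring]
    ring
  have ht3 : Tendsto (fun x : ℝ => q*(q-1)*(q-2)*c^3*(1+c*x)^(q-3)
      - (q*(q-1)*(q-2)*c^3 + q*(q-1)*(q-2)*(q-3)*c^4*x + 0*x^2 + 0*x^3 + 0*x^4))
      (𝓝[>] (0:ℝ)) (𝓝 0) := by
    have hc : ContinuousAt (fun x : ℝ => q*(q-1)*(q-2)*c^3*(1+c*x)^(q-3)
        - (q*(q-1)*(q-2)*c^3 + q*(q-1)*(q-2)*(q-3)*c^4*x + 0*x^2 + 0*x^3 + 0*x^4)) 0 :=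
      ((hca (q-3)).const_mul _).sub (Continuous.continuousAt (by fun_prop))
    have := hc.tendsto.mono_left (nhdsWithin_le_nhds (s := Set.Ioi (0:ℝ)))
    simpa using this
  have T3 : Tendsto (fun x : ℝ => (q*(q-1)*(q-2)*c^3*(1+c*x)^(q-3)
      - (q*(q-1)*(q-2)*c^3 + q*(q-1)*(q-2)*(q-3)*c^4*x + 0*x^2 + 0*x^3 + 0*x^4)) / x^(0+1))
      (𝓝[>] (0:ℝ)) (𝓝 0) := by
    refine lhop_step 0 _ _ hd3 ht3 0 ?_
    refine ht4.congr (fun x => ?_)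
    push_cast
    ring
  have hd2 : ∀ x ∈ Ioo (0:ℝ) 1, HasDerivAt (fun x : ℝ => q*(q-1)*c^2*(1+c*x)^(q-2) - (q*(q-1)*c^2 + q*(q-1)*(q-2)*c^3*x + q*(q-1)*(q-2)*(q-3)/2*c^4*x^2 + 0*x^3 + 0*x^4))
      (q*(q-1)*(q-2)*c^3*(1+c*x)^(q-3) - (q*(q-1)*(q-2)*c^3 + q*(q-1)*(q-2)*(q-3)*c^4*x + 0*x^2 + 0*x^3 + 0*x^4)) x := by
    intro x hx
    have h1 := (hasDerivAt_one_add_rpow c (q-2) x (hpos x hx)).const_mul (q*(q-1)*c^2)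
    have h2 := hasDerivAt_poly4 (q*(q-1)*c^2) (q*(q-1)*(q-2)*c^3) (q*(q-1)*(q-2)*(q-3)/2*c^4) 0 0 x
    have h3 := h1.sub h2
    refine h3.congr_deriv ?_
    rw [show q-2-1 = q-3 by ring]
    ring
  have ht2 : Tendsto (fun x : ℝ => q*(q-1)*c^2*(1+c*x)^(q-2) - (q*(q-1)*c^2 + q*(q-1)*(q-2)*c^3*x + q*(q-1)*(q-2)*(q-3)/2*c^4*x^2 + 0*x^3 + 0*x^4)) (𝓝[>] (0:ℝ)) (𝓝 0) := by
    have hc : ContinuousAt (fun x : ℝ => q*(q-1)*c^2*(1+c*x)^(q-2) - (q*(q-1)*c^2 + q*(q-1)*(q-2)*c^3*x + q*(q-1)*(q-2)*(q-3)/2*c^4*x^2 + 0*x^3 + 0*x^4)) 0 :=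
      ((hca (q-2)).const_mul _).sub (Continuous.continuousAt (by fun_prop))
    have := hc.tendsto.mono_left (nhdsWithin_le_nhds (s := Set.Ioi (0:ℝ)))
    simpa using this
  have hd1 : ∀ x ∈ Ioo (0:ℝ) 1, HasDerivAt (fun x : ℝ => q*c*(1+c*x)^(q-1) - (q*c + q*(q-1)*c^2*x + q*(q-1)*(q-2)/2*c^3*x^2 + q*(q-1)*(q-2)*(q-3)/6*c^4*x^3 + 0*x^4))
      (q*(q-1)*c^2*(1+c*x)^(q-2) - (q*(q-1)*c^2 + q*(q-1)*(q-2)*c^3*x + q*(q-1)*(q-2)*(q-3)/2*c^4*x^2 + 0*x^3 + 0*x^4)) x := by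
    intro x hx
    have h1 := (hasDerivAt_one_add_rpow c (q-1) x (hpos x hx)).const_mul (q*c)
    have h2 := hasDerivAt_poly4 (q*c) (q*(q-1)*c^2) (q*(q-1)*(q-2)/2*c^3) (q*(q-1)*(q-2)*(q-3)/6*c^4) 0 x
    have h3 := h1.sub h2
    refine h3.congr_deriv ?_
    rw [show q-1-1 = q-2 by ring]
    ring
  have ht1 : Tendsto (fun x : ℝ => q*c*(1+c*x)^(q-1) - (q*c + q*(q-1)*c^2*x + q*(q-1)*(q-2)/2*c^3*x^2 + q*(q-1)*(q-2)*(q-3)/6*c^4*x^3 + 0*x^4)) (𝓝[>] (0:ℝ)) (𝓝 0) := by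
    have hc : ContinuousAt (fun x : ℝ => q*c*(1+c*x)^(q-1) - (q*c + q*(q-1)*c^2*x + q*(q-1)*(q-2)/2*c^3*x^2 + q*(q-1)*(q-2)*(q-3)/6*c^4*x^3 + 0*x^4)) 0 :=
      ((hca (q-1)).const_mul _).sub (Continuous.continuousAt (by fun_prop))
    have := hc.tendsto.mono_left (nhdsWithin_le_nhds (s := Set.Ioi (0:ℝ)))
    simpa using this
  have hd0 : ∀ x ∈ Ioo (0:ℝ) 1, HasDerivAt (fun x : ℝ => (1+c*x)^q - (1 + q*c*x + q*(q-1)/2*c^2*x^2 + q*(q-1)*(q-2)/6*c^3*x^3 + q*(q-1)*(q-2)*(q-3)/24*c^4*x^4))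
      (q*c*(1+c*x)^(q-1) - (q*c + q*(q-1)*c^2*x + q*(q-1)*(q-2)/2*c^3*x^2 + q*(q-1)*(q-2)*(q-3)/6*c^4*x^3 + 0*x^4)) x := by
    intro x hx
    have h1 := (hasDerivAt_one_add_rpow c (q) x (hpos x hx))
    have h2 := hasDerivAt_poly4 1 (q*c) (q*(q-1)/2*c^2) (q*(q-1)*(q-2)/6*c^3) (q*(q-1)*(q-2)*(q-3)/24*c^4) x
    have h3 := h1.sub h2
    refine h3.congr_deriv ?_
    ring
  have ht0 : Tendsto (fun x : ℝ => (1+c*x)^q - (1 + q*c*x + q*(q-1)/2*c^2*x^2 + q*(q-1)*(q-2)/6*c^3*x^3 + q*(q-1)*(q-2)*(q-3)/24*c^4*x^4)) (𝓝[>] (0:ℝ)) (𝓝 0) := by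
    have hc : ContinuousAt (fun x : ℝ => (1+c*x)^q - (1 + q*c*x + q*(q-1)/2*c^2*x^2 + q*(q-1)*(q-2)/6*c^3*x^3 + q*(q-1)*(q-2)*(q-3)/24*c^4*x^4)) 0 :=
      (hca q).sub (Continuous.continuousAt (by fun_prop))
    have := hc.tendsto.mono_left (nhdsWithin_le_nhds (s := Set.Ioi (0:ℝ)))
    simpa using this
  have T2 : Tendsto (fun x : ℝ => (q*(q-1)*c^2*(1+c*x)^(q-2) - (q*(q-1)*c^2 + q*(q-1)*(q-2)*c^3*x + q*(q-1)*(q-2)*(q-3)/2*c^4*x^2 + 0*x^3 + 0*x^4)) / x^(1+1)) (𝓝[>] (0:ℝ)) (𝓝 0) := by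
    refine lhop_step 1 _ _ hd2 ht2 0 ?_
    have h := T3.const_mul ((2:ℝ)⁻¹)
    rw [mul_zero] at h
    refine h.congr (fun x => ?_)
    push_cast
    ring
  have T1 : Tendsto (fun x : ℝ => (q*c*(1+c*x)^(q-1) - (q*c + q*(q-1)*c^2*x + q*(q-1)*(q-2)/2*c^3*x^2 + q*(q-1)*(q-2)*(q-3)/6*c^4*x^3 + 0*x^4)) / x^(2+1)) (𝓝[>] (0:ℝ)) (𝓝 0) := by
    refine lhop_step 2 _ _ hd1 ht1 0 ?_
    have h := T2.const_mul ((3:ℝ)⁻¹)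
    rw [mul_zero] at h
    refine h.congr (fun x => ?_)
    push_cast
    ring
  have T0 : Tendsto (fun x : ℝ => ((1+c*x)^q - (1 + q*c*x + q*(q-1)/2*c^2*x^2 + q*(q-1)*(q-2)/6*c^3*x^3 + q*(q-1)*(q-2)*(q-3)/24*c^4*x^4)) / x^(3+1)) (𝓝[>] (0:ℝ)) (𝓝 0) := by
    refine lhop_step 3 _ _ hd0 ht0 0 ?_
    have h := T1.const_mul ((4:ℝ)⁻¹)
    rw [mul_zero] at h
    refine h.congr (fun x => ?_)
    push_cast
    ring
  refine T0.congr (fun x => ?_)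
  simp only [bfn, Pb]


lemma log_taylor (c : ℝ) (hc0 : 0 ≤ c) (hc1 : c ≤ 1) :
    Tendsto (fun x => (Lb c x - PL c x) / x ^ 4) (𝓝[>] (0:ℝ)) (𝓝 0) := by
  have htend : Tendsto (fun x : ℝ => 2 * x) (𝓝[>] (0:ℝ)) (𝓝 0) := by
    have : Tendsto (fun x : ℝ => 2 * x) (𝓝 (0:ℝ)) (𝓝 (2*0)) :=
      (continuous_const.mul continuous_id).tendsto 0
    simpa using this.mono_left nhdsWithin_le_nhds
  refine squeeze_zero_norm' ?_ htend
  filter_upwards [Ioo_mem_nhdsGT_of_mem (by norm_num : (0:ℝ) ∈ Ico (0:ℝ) (1/2))]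
    with x hx
  obtain ⟨hx0, hx12⟩ := hx
  have hcxnn : (0:ℝ) ≤ c * x := by positivity
  have hcxlt : c * x < 1/2 := by nlinarith
  have hcx : |(-(c*x))| < 1 := by
    rw [abs_neg, abs_of_nonneg hcxnn]; linarith
  have hb := Real.abs_log_sub_add_sum_range_le hcx 4
  have hsum : (∑ i ∈ Finset.range 4, (-(c*x)) ^ (i+1) / (i+1)) + Real.log (1 - -(c*x))
      = Lb c x - PL c x := by
    simp only [Finset.sum_range_succ, Finset.sum_range_zero, Lb, PL]
    ring_nf
  rw [hsum, abs_neg, abs_of_nonneg hcxnn] at hb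
  have hb2 : |Lb c x - PL c x| ≤ 2 * x ^ 5 := by
    refine hb.trans ?_
    have h1 : (c*x) ^ (4+1) ≤ x ^ 5 := by
      calc (c*x)^5 ≤ (1*x)^5 := by
            apply pow_le_pow_left₀ hcxnn
            nlinarith
        _ = x ^ 5 := by ring
    have h2 : (1:ℝ)/2 ≤ 1 - c*x := by linarith
    calc (c*x) ^ (4+1) / (1 - c*x) ≤ x^5 / (1/2) :=
          div_le_div₀ (by positivity) h1 (by norm_num) h2
      _ = 2 * x^5 := by ring
  calc ‖(Lb c x - PL c x) / x ^ 4‖ = |Lb c x - PL c x| / x^4 := by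
        rw [Real.norm_eq_abs, abs_div, abs_of_nonneg (by positivity : (0:ℝ) ≤ x^4)]
    _ ≤ (2 * x^5) / x^4 := div_le_div_of_nonneg_right hb2 (by positivity)
    _ = 2 * x := by
        field_simp


lemma cont_tendsto {f : ℝ → ℝ} (hf : Continuous f) :
    Filter.Tendsto f (nhdsWithin 0 (Set.Ioi (0:ℝ))) (nhds (f 0)) :=
  (hf.tendsto 0).mono_left nhdsWithin_le_nhds

lemma Pb_cont (c q : ℝ) : Continuous (fun x => Pb c q x) := by
  simp only [Pb]; fun_prop

lemma PL_cont (c : ℝ) : Continuous (fun x => PL c x) := by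
  simp only [PL]; fun_prop

lemma Pb_zero (c q : ℝ) : Pb c q 0 = 1 := by simp [Pb]

lemma PL_zero (c : ℝ) : PL c 0 = 0 := by simp [PL]

lemma Lb_tendsto (c : ℝ) : Tendsto (fun x : ℝ => Lb c x) (𝓝[>] (0:ℝ)) (𝓝 0) := by
  have h2 : ContinuousAt (fun x : ℝ => 1 + c * x) 0 := by fun_prop
  have h3 : ContinuousAt Real.log (1 + c * 0) := Real.continuousAt_log (by norm_num)
  have h4 : ContinuousAt (fun x : ℝ => Real.log (1 + c * x)) 0 :=
    ContinuousAt.comp (f := fun x : ℝ => 1 + c * x) h3 h2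
  have h5 := h4.tendsto.mono_left (nhdsWithin_le_nhds (s := Set.Ioi (0:ℝ)))
  simpa [Lb] using h5

lemma D_taylor (l : ℝ) (hl0 : 0 ≤ l) (hl1 : l < 1) :
    Tendsto (fun x => Dfun l x / x^4) (𝓝[>] (0:ℝ)) (𝓝 (Rd l 0)) := by
  have TDp : Tendsto (fun x => Dp l x / x^4) (𝓝[>] (0:ℝ)) (𝓝 (Rd l 0)) := by
    refine (cont_tendsto (Rd_cont l)).congr' ?_
    filter_upwards [self_mem_nhdsWithin] with x hx
    have hb : x^4 ≠ 0 := pow_ne_zero 4 (ne_of_gt hx)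
    rw [Dp_eq, mul_div_cancel_left₀ _ hb]
  have TL1 := log_taylor 1 zero_le_one le_rfl
  have TLl := log_taylor l hl0 hl1.le
  have TCD : Tendsto (fun x : ℝ =>
      -((1+x*l)*(1+x)*((Lb 1 x - Lb l x) + (PL 1 x - PL l x)))) (𝓝[>] (0:ℝ)) (𝓝 0) := by
    have h := (((cont_tendsto (f := fun x : ℝ => (1+x*l)*(1+x)) (by fun_prop)).mul
      (((Lb_tendsto 1).sub (Lb_tendsto l)).add
        ((cont_tendsto (PL_cont 1)).sub (cont_tendsto (PL_cont l))))).neg)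
    simpa [PL_zero] using h
  have hnum : ∀ x : ℝ, Dfun l x = Dp l x
      + (-((1+x*l)*(1+x)*((Lb 1 x - Lb l x) + (PL 1 x - PL l x)))) * (Lb 1 x - PL 1 x)
      - (-((1+x*l)*(1+x)*((Lb 1 x - Lb l x) + (PL 1 x - PL l x)))) * (Lb l x - PL l x) := by
    intro x
    simp only [Dfun, Dp]
    ring
  have Tall := (TDp.add (TCD.mul TL1)).sub (TCD.mul TLl)
  have Tall2 : Tendsto (fun x : ℝ => Dp l x / x^4
      + (-((1+x*l)*(1+x)*((Lb 1 x - Lb l x) + (PL 1 x - PL l x)))) * ((Lb 1 x - PL 1 x) / x^4)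
      - (-((1+x*l)*(1+x)*((Lb 1 x - Lb l x) + (PL 1 x - PL l x)))) * ((Lb l x - PL l x) / x^4))
      (𝓝[>] (0:ℝ)) (𝓝 (Rd l 0)) := by
    simpa using Tall
  refine Tall2.congr (fun x => ?_)
  conv_rhs => rw [hnum x]
  simp only [add_div, sub_div, mul_div_assoc]

lemma M_taylor (l s : ℝ) (hl0 : 0 ≤ l) (hl1 : l < 1) :
    Tendsto (fun x => Mfun l s x / x^4) (𝓝[>] (0:ℝ)) (𝓝 (Rm l s 0)) := by
  have TMp : Tendsto (fun x => Mp l s x / x^4) (𝓝[>] (0:ℝ)) (𝓝 (Rm l s 0)) := by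
    refine (cont_tendsto (Rm_cont l s)).congr' ?_
    filter_upwards [self_mem_nhdsWithin] with x hx
    have hb : x^4 ≠ 0 := pow_ne_zero 4 (ne_of_gt hx)
    rw [Mp_eq, mul_div_cancel_left₀ _ hb]
  have TL1 := log_taylor 1 zero_le_one le_rfl
  have TLl := log_taylor l hl0 hl1.le
  have TB1p := rpow_taylor 1 (s+1) zero_le_one le_rfl
  have TBlp := rpow_taylor l (s+1) hl0 hl1.le
  have TB1s := rpow_taylor 1 s zero_le_one le_rfl
  have TBls := rpow_taylor l s hl0 hl1.le
  have Tc1 : Tendsto (fun x : ℝ => (1-l)*x) (𝓝[>] (0:ℝ)) (𝓝 0) := by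
    have := cont_tendsto (f := fun x : ℝ => (1-l)*x) (by fun_prop)
    simpa using this
  have Tc2 : Tendsto (fun x : ℝ => (s+1)*x^2*(1-l)^2) (𝓝[>] (0:ℝ)) (𝓝 0) := by
    have := cont_tendsto (f := fun x : ℝ => (s+1)*x^2*(1-l)^2) (by fun_prop)
    simpa using this
  have TC3 : Tendsto (fun x : ℝ =>
      (s+1)*(1+x*l)*(x*(1-l) - (1+x)*(Lb 1 x - Lb l x))) (𝓝[>] (0:ℝ)) (𝓝 0) := by
    have h := (cont_tendsto (f := fun x : ℝ => (s+1)*(1+x*l)) (by fun_prop)).mul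
      ((cont_tendsto (f := fun x : ℝ => x*(1-l)) (by fun_prop)).sub
        ((cont_tendsto (f := fun x : ℝ => 1+x) (by fun_prop)).mul
          ((Lb_tendsto 1).sub (Lb_tendsto l))))
    simpa using h
  have TC4 : Tendsto (fun x : ℝ =>
      (s+1)*(Pb 1 s x - Pb l s x)*(1+x*l)*(1+x)) (𝓝[>] (0:ℝ)) (𝓝 0) := by
    have h := (((cont_tendsto (f := fun x : ℝ => (s+1)) (by fun_prop)).mul
      ((cont_tendsto (Pb_cont 1 s)).sub (cont_tendsto (Pb_cont l s)))).mul
      (cont_tendsto (f := fun x : ℝ => 1+x*l) (by fun_prop))).mul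
      (cont_tendsto (f := fun x : ℝ => 1+x) (by fun_prop))
    simpa [Pb_zero] using h
  have hnum : ∀ x : ℝ, Mfun l s x = Mp l s x
      + ((1-l)*x) * (bfn 1 (s+1) x - Pb 1 (s+1) x)
      - ((1-l)*x) * (bfn l (s+1) x - Pb l (s+1) x)
      - ((s+1)*x^2*(1-l)^2) * (bfn 1 s x - Pb 1 s x)
      - ((s+1)*(1+x*l)*(x*(1-l) - (1+x)*(Lb 1 x - Lb l x))) * (bfn 1 s x - Pb 1 s x)
      + ((s+1)*(1+x*l)*(x*(1-l) - (1+x)*(Lb 1 x - Lb l x))) * (bfn l s x - Pb l s x)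
      + ((s+1)*(Pb 1 s x - Pb l s x)*(1+x*l)*(1+x)) * (Lb 1 x - PL 1 x)
      - ((s+1)*(Pb 1 s x - Pb l s x)*(1+x*l)*(1+x)) * (Lb l x - PL l x) := by
    intro x
    simp only [Mfun, Mp]
    ring
  have Tall := ((((((TMp.add (Tc1.mul TB1p)).sub (Tc1.mul TBlp)).sub
    (Tc2.mul TB1s)).sub (TC3.mul TB1s)).add (TC3.mul TBls)).add
    (TC4.mul TL1)).sub (TC4.mul TLl)
  have Tall2 : Tendsto (fun x : ℝ => Mp l s x / x^4
      + ((1-l)*x) * ((bfn 1 (s+1) x - Pb 1 (s+1) x) / x^4)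
      - ((1-l)*x) * ((bfn l (s+1) x - Pb l (s+1) x) / x^4)
      - ((s+1)*x^2*(1-l)^2) * ((bfn 1 s x - Pb 1 s x) / x^4)
      - ((s+1)*(1+x*l)*(x*(1-l) - (1+x)*(Lb 1 x - Lb l x))) * ((bfn 1 s x - Pb 1 s x) / x^4)
      + ((s+1)*(1+x*l)*(x*(1-l) - (1+x)*(Lb 1 x - Lb l x))) * ((bfn l s x - Pb l s x) / x^4)
      + ((s+1)*(Pb 1 s x - Pb l s x)*(1+x*l)*(1+x)) * ((Lb 1 x - PL 1 x) / x^4)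
      - ((s+1)*(Pb 1 s x - Pb l s x)*(1+x*l)*(1+x)) * ((Lb l x - PL l x) / x^4))
      (𝓝[>] (0:ℝ)) (𝓝 (Rm l s 0)) := by
    simpa using Tall
  refine Tall2.congr (fun x => ?_)
  conv_rhs => rw [hnum x]
  simp only [add_div, sub_div, mul_div_assoc]

/-- The asymptotic bias coefficient β_{κ,λ}/δ_{κ,λ} tends to 1/α − ρ*/α² as κ → 0+. -/
theorem stmt_19 (α ρ l : ℝ) (hα : 0 < α) (hρ : ρ < 0) (hl : l ∈ Set.Ico (0 : ℝ) 1)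
    (h : ℝ → ℝ) (hh : ∀ t : ℝ, 0 < t → h t = (t ^ ρ - 1) / ρ)
    (A B c δ β : ℝ → ℝ)
    (hA : ∀ κ : ℝ, 0 < κ →
      A κ = (1 / (1 - l)) * (∫ u in l..1, h ((1 + κ * u) ^ (-(1 / α))))
              - h ((1 + κ) ^ (-(1 / α))))
    (hB : ∀ κ : ℝ, 0 < κ →
      B κ = h ((1 + κ) ^ (-(1 / α))) - h ((1 + κ * l) ^ (-(1 / α))))
    (hc : ∀ κ : ℝ, 0 < κ →
      c κ = (1 + κ * l) / ((1 - l) * κ)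
              + ((1 + κ * l) * (1 + κ) / ((1 - l) ^ 2 * κ ^ 2)) *
                  Real.log ((1 + κ * l) / (1 + κ)))
    (hδ : ∀ κ : ℝ, 0 < κ →
      δ κ = 1 - ((1 + κ * l) * (1 + κ) / ((1 - l) ^ 2 * κ ^ 2)) *
                  (Real.log ((1 + κ) / (1 + κ * l))) ^ 2)
    (hβ : ∀ κ : ℝ, 0 < κ → β κ = A κ - B κ * c κ) :
    Tendsto (fun κ => β κ / δ κ) (nhdsWithin 0 (Set.Ioi 0))
      (nhds (1 / α - ρ / α ^ 2)) := by
  obtain ⟨hl0, hl1⟩ := hl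
  have hαne : α ≠ 0 := ne_of_gt hα
  have hρne : ρ ≠ 0 := ne_of_lt hρ
  set s : ℝ := -(1 / α) * ρ with hs
  have hspos : 0 < s := by
    rw [hs]
    have h1 : 0 < 1/α := by positivity
    nlinarith
  have hs1pos : 0 < s + 1 := by linarith
  have hs1ne : s + 1 ≠ 0 := ne_of_gt hs1pos
  have hml : (0:ℝ) < 1 - l := by linarith
  have hmlne : (1:ℝ) - l ≠ 0 := ne_of_gt hml
  -- pointwise reduction of h
  have hpow : ∀ t : ℝ, 0 < t → h (t ^ (-(1 / α))) = (t ^ s - 1) / ρ := by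
    intro t ht
    rw [hh _ (Real.rpow_pos_of_pos ht _), ← Real.rpow_mul ht.le, ← hs]
  -- eventual equality
  have hEq : (fun κ => β κ / δ κ) =ᶠ[𝓝[>] (0:ℝ)]
      (fun κ => (Mfun l s κ / κ^4) / (((s+1)*ρ) * (Dfun l κ / κ^4))) := by
    filter_upwards [self_mem_nhdsWithin] with κ hκ
    have hκ0 : (0:ℝ) < κ := hκ
    have hκne : κ ≠ 0 := ne_of_gt hκ0
    have h1κ : (0:ℝ) < 1 + κ := by linarith
    have h1κl : (0:ℝ) < 1 + κ * l := by nlinarith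
    have hupos : ∀ u ∈ Set.uIcc l 1, (0:ℝ) < 1 + κ * u := by
      intro u hu
      rw [Set.uIcc_of_le hl1.le, Set.mem_Icc] at hu
      nlinarith [hu.1, hu.2]
    have hcont : ContinuousOn (fun u : ℝ => (1 + κ * u) ^ s) (Set.uIcc l 1) := by
      apply ContinuousOn.rpow_const (by fun_prop)
      intro u hu
      exact Or.inl (ne_of_gt (hupos u hu))
    have hint1 : (∫ u in l..1, (1 + κ * u) ^ s)
        = ((1+κ)^(s+1) - (1+κ*l)^(s+1))/((s+1)*κ) := by
      have hftc : ∀ u ∈ Set.uIcc l 1,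
          HasDerivAt (fun u : ℝ => (1 + κ * u)^(s+1)/((s+1)*κ)) ((1 + κ * u) ^ s) u := by
        intro u hu
        have h1 := (hasDerivAt_one_add_rpow κ (s+1) u (hupos u hu)).div_const ((s+1)*κ)
        refine h1.congr_deriv ?_
        rw [show s+1-1 = s by ring]
        field_simp
      rw [intervalIntegral.integral_eq_sub_of_hasDerivAt hftc hcont.intervalIntegrable]
      rw [show (1:ℝ) + κ * 1 = 1 + κ by ring]
      ring
    have heqon : Set.EqOn (fun u : ℝ => h ((1 + κ * u) ^ (-(1 / α))))
        (fun u : ℝ => ((1 + κ * u) ^ s - 1) / ρ) (Set.uIcc l 1) :=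
      fun u hu => hpow _ (hupos u hu)
    have hint : (∫ u in l..1, h ((1 + κ * u) ^ (-(1 / α))))
        = ((((1+κ)^(s+1) - (1+κ*l)^(s+1))/((s+1)*κ)) - (1-l))/ρ := by
      rw [intervalIntegral.integral_congr heqon, intervalIntegral.integral_div,
        intervalIntegral.integral_sub hcont.intervalIntegrable intervalIntegrable_const,
        hint1]
      simp
    have hb1 : h ((1 + κ) ^ (-(1 / α))) = ((1+κ)^s - 1)/ρ := hpow _ h1κ
    have hb2 : h ((1 + κ * l) ^ (-(1 / α))) = ((1+κ*l)^s - 1)/ρ := hpow _ h1κl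
    have hlog1 : Real.log ((1+κ*l)/(1+κ)) = Lb l κ - Lb 1 κ := by
      rw [Real.log_div (ne_of_gt h1κl) (ne_of_gt h1κ)]
      simp only [Lb]
      rw [show (1:ℝ) + l * κ = 1 + κ * l by ring, show (1:ℝ) + 1 * κ = 1 + κ by ring]
    have hlog2 : Real.log ((1+κ)/(1+κ*l)) = Lb 1 κ - Lb l κ := by
      rw [Real.log_div (ne_of_gt h1κ) (ne_of_gt h1κl)]
      simp only [Lb]
      rw [show (1:ℝ) + l * κ = 1 + κ * l by ring, show (1:ℝ) + 1 * κ = 1 + κ by ring]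
    have hβval : β κ = Mfun l s κ / (((s+1)*ρ) * ((1-l)^2 * κ^2)) := by
      rw [hβ κ hκ0, hA κ hκ0, hB κ hκ0, hc κ hκ0, hint, hb1, hb2, hlog1]
      simp only [Mfun, bfn, Lb]
      rw [show (1:ℝ) + 1 * κ = 1 + κ by ring, show (1:ℝ) + l * κ = 1 + κ * l by ring]
      field_simp
      ring
    have hδval : δ κ = Dfun l κ / ((1-l)^2 * κ^2) := by
      rw [hδ κ hκ0, hlog2]
      simp only [Dfun, Lb]
      rw [show (1:ℝ) + 1 * κ = 1 + κ by ring, show (1:ℝ) + l * κ = 1 + κ * l by ring]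
      field_simp
    rw [hβval, hδval]
    rcases eq_or_ne (Dfun l κ) 0 with hD | hD
    · simp [hD]
    · field_simp
  -- limits
  have TM := M_taylor l s hl0 hl1
  have TD := D_taylor l hl0 hl1
  have hd0 : ((s+1)*ρ) * Rd l 0 ≠ 0 := by
    apply mul_ne_zero (mul_ne_zero hs1ne hρne)
    rw [Rd_zero]
    positivity
  have Tfin := TM.div (tendsto_const_nhds.mul TD) hd0
  have hval : Rm l s 0 / (((s+1)*ρ) * Rd l 0) = 1/α - ρ/α^2 := by
    have h1 : Rm l s 0 = ((-(s*(s+1)))/ρ) * (((s+1)*ρ) * Rd l 0) := by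
      rw [Rm_zero, Rd_zero]
      field_simp
    rw [h1, mul_div_assoc, div_self hd0, mul_one, hs]
    field_simp
    ring
  have Tβδ : Tendsto (fun κ => β κ / δ κ) (𝓝[>] (0:ℝ))
      (𝓝 (Rm l s 0 / (((s+1)*ρ) * Rd l 0))) := Tendsto.congr' hEq.symm Tfin
  rwa [hval] at Tβδ
end
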